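/- Let G be a topological group with identity 1, and let G̃ be the set of homotopy classes, relative to endpoints, of paths in G starting at 1. Define [a] * [b] := [a + (a(1)·b)], where a(1)·b denotes the path t ↦ a(1)·b(t) and + denotes concatenation of paths. Then: (i) * is well-defined and makes G̃ a group, with identity the class of the constant path at 1; (ii) the endpoint map e : G̃ → G, [a] ↦ a(1), is a group homomorphism whose image is the path component of 1 in G; (iii) the kernel of e is the set of homotopy classes of loops at 1, on which the operation * coincides with concatenation of loops, so that the kernel is the fundamental group π₁(G,1); and (iv) this kernel is a central subgroup of G̃. -/

import Mathlib

section Aux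

variable {X : Type*} [TopologicalSpace X]

/-- Transfer `Homotopic` along pointwise equal paths (possibly stated with different
endpoint terms). -/
lemma homotopic_of_eqfun {x y u v : X} (p : Path x y) (q : Path x y)
    (r : Path u v) (s : Path u v) (hr : ∀ t, p t = r t) (hs : ∀ t, q t = s t)
    (h : r.Homotopic s) : p.Homotopic q := by
  have hx : x = u := by rw [← p.source, ← r.source, hr 0]
  subst hx
  have hy : y = v := by rw [← p.target, ← r.target, hr 1]
  subst hy
  rw [show p = r from Path.ext (funext hr), show q = s from Path.ext (funext hs)]
  exact h

variable {G : Type*} [TopologicalSpace G] [Group G] [IsTopologicalGroup G]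

/-- Pointwise product of two paths in a topological group. -/
def ptMul {x y u v : G} (p : Path x y) (q : Path u v) : Path (x * u) (y * v) where
  toFun t := p t * q t
  continuous_toFun := by continuity
  source' := by simp
  target' := by simp

lemma ptMul_apply {x y u v : G} (p : Path x y) (q : Path u v) (t : unitInterval) :
    ptMul p q t = p t * q t := rfl

/-- Pointwise product of path homotopies. -/
def Path.Homotopy.ptMul {x y u v : G} {p p' : Path x y} {q q' : Path u v}
    (F : Path.Homotopy p p') (H : Path.Homotopy q q') :
    Path.Homotopy (_root_.ptMul p q) (_root_.ptMul p' q') where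
  toFun st := F st * H st
  continuous_toFun := by continuity
  map_zero_left t := by simp [ptMul_apply]
  map_one_left t := by simp [ptMul_apply]
  prop' t s hs := by
    have hF := F.prop' t s hs
    have hH := H.prop' t s hs
    simp only [ContinuousMap.coe_mk] at hF hH ⊢
    show F.toFun (t, s) * H.toFun (t, s) = _
    rw [hF, hH]
    rfl

lemma Path.Homotopic.ptMul {x y u v : G} {p p' : Path x y} {q q' : Path u v}
    (hp : p.Homotopic p') (hq : q.Homotopic q') :
    (_root_.ptMul p q).Homotopic (_root_.ptMul p' q') :=
  hp.map2 Path.Homotopy.ptMul hq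

end Aux


/-- The underlying set of the universal cover of a topological group `G`: homotopy classes
(relative to endpoints) of paths in `G` starting at the identity `1`. -/
abbrev UnivCover (G : Type*) [TopologicalSpace G] [Group G] : Type _ :=
  Σ x : G, Path.Homotopic.Quotient (1 : G) x

/-- The left translate `a(1) · b` of a path `b` starting at `1` by an element `x`. -/
def mulPath {G : Type*} [TopologicalSpace G] [Group G] [IsTopologicalGroup G]
    (x : G) {y : G} (b : Path (1 : G) y) : Path x (x * y) :=
  (b.map (continuous_mul_left x)).cast (mul_one x).symm rfl

section Defs

variable {G : Type*} [TopologicalSpace G] [Group G] [IsTopologicalGroup G]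

lemma mulPath_apply (x : G) {y : G} (b : Path (1 : G) y) (t : unitInterval) :
    mulPath x b t = x * b t := rfl

lemma mulPath_homotopic (x : G) {y : G} {b b' : Path (1 : G) y} (h : b.Homotopic b') :
    (mulPath x b).Homotopic (mulPath x b') := by
  refine homotopic_of_eqfun _ _ (b.map (continuous_mul_left x)) (b'.map (continuous_mul_left x))
    (fun t => rfl) (fun t => rfl) ?_
  exact Path.Homotopic.map h ⟨_, continuous_mul_left x⟩

/-- Multiplication on the universal cover. -/
noncomputable def ucMul (p q : UnivCover G) : UnivCover G :=
  ⟨p.1 * q.1, Quotient.map₂ (fun (a : Path (1 : G) p.1) (b : Path (1 : G) q.1) => a.trans (mulPath p.1 b))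
    (fun _ _ ha _ _ hb =>
      Path.Homotopic.hcomp ha (mulPath_homotopic p.1 hb)) p.2 q.2⟩

lemma ucMul_mk {x y : G} (a : Path (1 : G) x) (b : Path (1 : G) y) :
    ucMul ⟨x, ⟦a⟧⟩ ⟨y, ⟦b⟧⟩ = ⟨x * y, ⟦a.trans (mulPath x b)⟧⟩ := rfl

/-- The inverse path `t ↦ x⁻¹ · a(1-t)`. -/
def invPath {x : G} (a : Path (1 : G) x) : Path (1 : G) x⁻¹ :=
  (a.symm.map (continuous_mul_left x⁻¹)).cast (inv_mul_cancel x).symm (mul_one x⁻¹).symm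

lemma invPath_homotopic {x : G} {a a' : Path (1 : G) x} (h : a.Homotopic a') :
    (invPath a).Homotopic (invPath a') := by
  refine homotopic_of_eqfun _ _ (a.symm.map (continuous_mul_left x⁻¹))
    (a'.symm.map (continuous_mul_left x⁻¹)) (fun t => rfl) (fun t => rfl) ?_
  refine Path.Homotopic.map ?_ ⟨_, continuous_mul_left x⁻¹⟩
  obtain ⟨F⟩ := h
  exact ⟨F.symm₂⟩

/-- Inversion on the universal cover. -/
def ucInv (p : UnivCover G) : UnivCover G :=
  ⟨p.1⁻¹, Quotient.map invPath (fun _ _ h => invPath_homotopic h) p.2⟩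

omit [IsTopologicalGroup G] in
/-- Extensionality for `UnivCover` elements. -/
lemma UC_ext {x y : G} (h : x = y) (a : Path (1 : G) x) (b : Path (1 : G) y)
    (hab : a.Homotopic (b.cast rfl h)) : (⟨x, ⟦a⟧⟩ : UnivCover G) = ⟨y, ⟦b⟧⟩ := by
  subst h
  exact congrArg (Sigma.mk x) (Quotient.sound (show a.Homotopic b by simpa using hab))

end Defs


/-- The operation `[a] * [b] := [a + (a(1)·b)]` is well defined on the set `G̃` of homotopy
classes of paths starting at `1` and makes it a group; the endpoint map `e : G̃ → G` is a group
homomorphism with image the path component of `1`, whose kernel is the set of homotopy classes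
of loops at `1`, on which the operation coincides with concatenation of loops (so the kernel is
the fundamental group `π₁(G,1)`); moreover this kernel is central in `G̃`. -/
theorem univCover_group_structure (G : Type*) [TopologicalSpace G] [Group G]
    [IsTopologicalGroup G] :
    ∃ (mul : UnivCover G → UnivCover G → UnivCover G) (one : UnivCover G)
      (inv : UnivCover G → UnivCover G),
      -- (i) `mul` is well defined by `[a] * [b] = [a + (a(1)·b)]` ...
      (∀ (x y : G) (a : Path (1 : G) x) (b : Path (1 : G) y),
        mul ⟨x, ⟦a⟧⟩ ⟨y, ⟦b⟧⟩ = ⟨x * y, ⟦a.trans (mulPath x b)⟧⟩) ∧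
      -- ... the identity is the class of the constant path at `1` ...
      (one = ⟨1, ⟦Path.refl (1 : G)⟧⟩) ∧
      -- ... and these data form a group:
      (∀ p q r, mul (mul p q) r = mul p (mul q r)) ∧
      (∀ p, mul one p = p) ∧ (∀ p, mul p one = p) ∧
      (∀ p, mul (inv p) p = one) ∧
      -- (ii) the endpoint map `e : [a] ↦ a(1)` is a group homomorphism whose image is the
      -- path component of `1` in `G`:
      (∀ p q, (mul p q).1 = p.1 * q.1) ∧
      (Set.range (fun p : UnivCover G => p.1) = pathComponent (1 : G)) ∧
      -- (iii) the kernel of `e` is the set of homotopy classes of loops at `1`, and on it the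
      -- operation coincides with concatenation of loops (hence the kernel is `π₁(G,1)`):
      ({p : UnivCover G | p.1 = 1} =
        Set.range (fun γ : Path (1 : G) (1 : G) => (⟨1, ⟦γ⟧⟩ : UnivCover G))) ∧
      (∀ a b : Path (1 : G) (1 : G), mul ⟨1, ⟦a⟧⟩ ⟨1, ⟦b⟧⟩ = ⟨1, ⟦a.trans b⟧⟩) ∧
      -- (iv) the kernel of `e` is central in `G̃`:
      (∀ p q : UnivCover G, p.1 = 1 → mul p q = mul q p) := by
  refine ⟨ucMul, ⟨1, ⟦Path.refl (1 : G)⟧⟩, ucInv,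
    fun x y a b => rfl, rfl, ?_, ?_, ?_, ?_, fun p q => rfl, ?_, ?_, ?_, ?_⟩
  · -- associativity
    rintro ⟨x, a⟩ ⟨y, b⟩ ⟨z, c⟩
    induction a using Quotient.inductionOn with | h a => ?_
    induction b using Quotient.inductionOn with | h b => ?_
    induction c using Quotient.inductionOn with | h c => ?_
    rw [ucMul_mk, ucMul_mk, ucMul_mk, ucMul_mk]
    refine UC_ext (mul_assoc x y z) _ _ ?_
    refine homotopic_of_eqfun _ _
      ((a.trans (mulPath x b)).trans (mulPath (x * y) c))
      (a.trans ((mulPath x b).trans (mulPath (x * y) c)))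
      (fun t => rfl) ?_ ⟨Path.Homotopy.transAssoc a (mulPath x b) (mulPath (x * y) c)⟩
    intro t
    simp only [Path.cast_coe, Path.trans_apply, mulPath_apply]
    split_ifs <;> simp [mul_assoc]
  · -- one_mul
    rintro ⟨x, a⟩
    induction a using Quotient.inductionOn with | h a => ?_
    rw [show (⟨1, ⟦Path.refl (1 : G)⟧⟩ : UnivCover G) = ⟨1, ⟦Path.refl (1 : G)⟧⟩ from rfl,
      ucMul_mk]
    refine UC_ext (one_mul x) _ _ ?_
    refine homotopic_of_eqfun _ _
      ((Path.refl (1 : G)).trans (mulPath 1 a)) (mulPath 1 a)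
      (fun t => rfl) ?_ ⟨Path.Homotopy.reflTrans (mulPath 1 a)⟩
    intro t
    simp [mulPath_apply]
  · -- mul_one
    rintro ⟨x, a⟩
    induction a using Quotient.inductionOn with | h a => ?_
    rw [ucMul_mk]
    refine UC_ext (mul_one x) _ _ ?_
    refine homotopic_of_eqfun _ _
      (a.trans (Path.refl x)) a
      ?_ (fun t => by simp) ⟨Path.Homotopy.transRefl a⟩
    intro t
    simp only [Path.trans_apply, mulPath_apply, Path.refl_apply]
    split_ifs <;> simp
  · -- inv_mul
    rintro ⟨x, a⟩
    induction a using Quotient.inductionOn with | h a => ?_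
    rw [show ucInv (⟨x, ⟦a⟧⟩ : UnivCover G) = ⟨x⁻¹, ⟦invPath a⟧⟩ from rfl, ucMul_mk]
    refine UC_ext (inv_mul_cancel x) _ _ ?_
    refine homotopic_of_eqfun _ _
      ((a.symm.trans a).map (continuous_mul_left x⁻¹)) ((Path.refl x).map (continuous_mul_left x⁻¹))
      ?_ (fun t => by simp) ?_
    · intro t
      simp only [Path.trans_apply, Path.map_coe, Function.comp_apply, mulPath_apply]
      split_ifs <;> rfl
    · exact (Path.Homotopic.map ⟨Path.Homotopy.reflSymmTrans a⟩ ⟨_, continuous_mul_left x⁻¹⟩).symm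
  · -- range = pathComponent 1
    ext x
    constructor
    · rintro ⟨⟨y, c⟩, rfl⟩
      obtain ⟨a, rfl⟩ := Quotient.exists_rep c
      exact ⟨a⟩
    · intro h
      obtain ⟨a⟩ : Joined (1 : G) x := h
      exact ⟨⟨x, ⟦a⟧⟩, rfl⟩
  · -- kernel = loops
    ext ⟨x, c⟩
    simp only [Set.mem_setOf_eq, Set.mem_range]
    constructor
    · rintro rfl
      obtain ⟨γ, rfl⟩ := Quotient.exists_rep c
      exact ⟨γ, rfl⟩
    · rintro ⟨γ, h⟩
      exact (congrArg Sigma.fst h).symm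
  · -- operation on loops is concatenation
    intro a b
    rw [ucMul_mk]
    refine UC_ext (one_mul 1) _ _ ?_
    refine homotopic_of_eqfun _ _ (a.trans b) (a.trans b)
      ?_ (fun t => rfl) (Path.Homotopic.refl _)
    intro t
    simp only [Path.trans_apply, mulPath_apply]
    split_ifs <;> simp
  · -- centrality
    rintro ⟨x, c⟩ ⟨y, d⟩ h
    dsimp only at h
    subst h
    induction c using Quotient.inductionOn with | h a => ?_
    induction d using Quotient.inductionOn with | h b => ?_
    rw [ucMul_mk, ucMul_mk]
    refine UC_ext (by simp : (1 : G) * y = y * 1) _ _ ?_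
    have h1 : (a.trans (mulPath 1 b)).Homotopic
        ((ptMul b a).cast (by simp) (by simp)) := by
      refine homotopic_of_eqfun _ _
        (ptMul ((Path.refl (1 : G)).trans b) (a.trans (Path.refl (1 : G))))
        (ptMul b a) ?_ (fun t => rfl) ?_
      · intro t
        simp only [Path.trans_apply, mulPath_apply, ptMul_apply, Path.refl_apply]
        split_ifs <;> simp
      · exact Path.Homotopic.ptMul ⟨Path.Homotopy.reflTrans b⟩ ⟨Path.Homotopy.transRefl a⟩
    have h2 : (b.trans (mulPath y a)).Homotopic
        ((ptMul b a).cast (by simp) (by simp)) := by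
      refine homotopic_of_eqfun _ _
        (ptMul (b.trans (Path.refl y)) ((Path.refl (1 : G)).trans a))
        (ptMul b a) ?_ (fun t => rfl) ?_
      · intro t
        simp only [Path.trans_apply, mulPath_apply, ptMul_apply, Path.refl_apply]
        split_ifs <;> simp
      · exact Path.Homotopic.ptMul ⟨Path.Homotopy.transRefl b⟩ ⟨Path.Homotopy.reflTrans a⟩
    exact h1.trans (homotopic_of_eqfun _ _ ((ptMul b a).cast (by simp) rfl)
      (b.trans (mulPath y a)) (fun t => rfl) (fun t => rfl) h2.symm)
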